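/- Phase-space rotation with subcritical constant damping: let λ > 0, ε ∈ (0,λ), and let (α,β), (γ,δ₀) ∈ ℝ² be nonzero vectors. Then there exist r > 0 and t₂ with 0 < t₂ ≤ 2π/√(ε(2λ−ε)) such that the solution u of u'' + 2(λ−ε)u' + λ²u = 0 with u(0) = α, u'(0) = β satisfies u(t₂) = rγ and u'(t₂) = rδ₀. -/

import Mathlib

open Complex in
/-- Phase-space rotation with subcritical constant damping: the solution with
data `(α,β) ≠ 0` reaches a positive multiple of any nonzero `(γ,δ₀)` within
time `2π/√(ε(2λ−ε))`. -/
theorem stmt_13 (lam ε : ℝ) (hlam : 0 < lam) (hε : 0 < ε) (hεlam : ε < lam)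
    (α β γ δ₀ : ℝ) (hαβ : α ^ 2 + β ^ 2 ≠ 0) (hγδ : γ ^ 2 + δ₀ ^ 2 ≠ 0)
    (u : ℝ → ℝ) (hu : ContDiff ℝ 2 u)
    (hode : ∀ t,
      deriv (deriv u) t + 2 * (lam - ε) * deriv u t + lam ^ 2 * u t = 0)
    (hu0 : u 0 = α) (hu'0 : deriv u 0 = β) :
    ∃ r t₂ : ℝ, 0 < r ∧ 0 < t₂ ∧
      t₂ ≤ 2 * Real.pi / Real.sqrt (ε * (2 * lam - ε)) ∧
      u t₂ = r * γ ∧ deriv u t₂ = r * δ₀ := by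
  set μ : ℝ := lam - ε with hμdef
  have hμ : 0 < μ := by simp only [hμdef]; linarith
  set ω : ℝ := Real.sqrt (ε * (2 * lam - ε)) with hωdef
  have hωpos : 0 < ω := Real.sqrt_pos.mpr (by nlinarith)
  have hωne : ω ≠ 0 := ne_of_gt hωpos
  have hω2 : ω ^ 2 = lam ^ 2 - μ ^ 2 := by
    rw [hωdef, Real.sq_sqrt (by nlinarith : (0:ℝ) ≤ ε * (2 * lam - ε))]
    simp only [hμdef]; ring
  -- complex initial data and target
  set z₀ : ℂ := (α : ℂ) + (((β + μ * α) / ω : ℝ) : ℂ) * I with hz₀def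
  set w : ℂ := (γ : ℂ) + (((δ₀ + μ * γ) / ω : ℝ) : ℂ) * I with hwdef
  have hz₀ : z₀ ≠ 0 := by
    intro h
    have hre : α = 0 := by simpa [hz₀def] using congrArg Complex.re h
    have him : (β + μ * α) / ω = 0 := by simpa [hz₀def] using congrArg Complex.im h
    rw [div_eq_zero_iff] at him
    have hβ : β = 0 := by rcases him with h' | h' <;> [linarith [hre ▸ h']; exact absurd h' hωne]
    exact hαβ (by rw [hre, hβ]; ring)
  have hw : w ≠ 0 := by
    intro h
    have hre : γ = 0 := by simpa [hwdef] using congrArg Complex.re h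
    have him : (δ₀ + μ * γ) / ω = 0 := by simpa [hwdef] using congrArg Complex.im h
    rw [div_eq_zero_iff] at him
    have hδ : δ₀ = 0 := by rcases him with h' | h' <;> [linarith [hre ▸ h']; exact absurd h' hωne]
    exact hγδ (by rw [hre, hδ]; ring)
  -- differentiability facts
  have h2 : ContDiff ℝ (1 + 1) u := by
    have : ((2:ℕ) : WithTop ℕ∞) = 1 + 1 := by norm_num
    exact this ▸ hu
  have hdu : Differentiable ℝ u := hu.differentiable (by norm_num)
  have hdu' : Differentiable ℝ (deriv u) :=
    (contDiff_succ_iff_deriv.mp h2).2.2.differentiable (by norm_num)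
  -- the complex phase function and comparison solution
  set c : ℂ := -(μ : ℂ) - (ω : ℂ) * I with hcdef
  set f : ℝ → ℂ := fun t => (u t : ℂ) + (((deriv u t + μ * u t) / ω : ℝ) : ℂ) * I with hfdef
  set g : ℝ → ℂ := fun t => Complex.exp (c * t) * z₀ with hgdef
  have hf' : ∀ t : ℝ, HasDerivAt f (c * f t) t := by
    intro t
    have h1 : HasDerivAt u (deriv u t) t := (hdu t).hasDerivAt
    have h2' : HasDerivAt (deriv u) (deriv (deriv u) t) t := (hdu' t).hasDerivAt
    have hD : HasDerivAt f
        (((deriv u t : ℝ) : ℂ) + (((deriv (deriv u) t + μ * deriv u t) / ω : ℝ) : ℂ) * I) t := by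
      have hA : HasDerivAt (fun s => ((u s : ℝ) : ℂ)) ((deriv u t : ℝ) : ℂ) t :=
        h1.ofReal_comp
      have hB : HasDerivAt (fun s => (((deriv u s + μ * u s) / ω : ℝ) : ℂ))
          ((((deriv (deriv u) t + μ * deriv u t) / ω : ℝ)) : ℂ) t :=
        ((h2'.add (h1.const_mul μ)).div_const ω).ofReal_comp
      simpa [hfdef, Pi.add_def] using hA.add (hB.mul_const I)
    convert hD using 1
    have hu'' : deriv (deriv u) t = -(2 * μ) * deriv u t - lam ^ 2 * u t := by
      have := hode t; linarith
    rw [hu'']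
    apply Complex.ext
    · simp only [hcdef, hfdef, Complex.add_re, Complex.mul_re, Complex.sub_re,
        Complex.neg_re, Complex.ofReal_re, Complex.mul_im, Complex.sub_im,
        Complex.neg_im, Complex.ofReal_im, Complex.I_re, Complex.I_im,
        Complex.add_im]
      field_simp
      ring
    · simp only [hcdef, hfdef, Complex.add_re, Complex.mul_re, Complex.sub_re,
        Complex.neg_re, Complex.ofReal_re, Complex.mul_im, Complex.sub_im,
        Complex.neg_im, Complex.ofReal_im, Complex.I_re, Complex.I_im,
        Complex.add_im]
      field_simp
      linear_combination (-(u t)) * hω2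
  have hg' : ∀ t : ℝ, HasDerivAt g (c * g t) t := by
    intro t
    have h1 : HasDerivAt (fun s : ℝ => c * (s : ℂ)) c t := by
      simpa using (Complex.ofRealCLM.hasDerivAt (x := t)).const_mul c
    have h2' : HasDerivAt (fun s : ℝ => Complex.exp (c * s)) (Complex.exp (c * t) * c) t :=
      h1.cexp
    have := h2'.mul_const z₀
    simpa [hgdef, mul_comm, mul_assoc, mul_left_comm] using this
  -- choice of time t₂
  set θ : ℝ := (z₀ / w).arg with hθdef
  have hθlepi : θ ≤ Real.pi := Complex.arg_le_pi _
  have hθgt : -Real.pi < θ := Complex.neg_pi_lt_arg _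
  set t₂ : ℝ := if 0 < θ then θ / ω else (θ + 2 * Real.pi) / ω with ht₂def
  have hπ : (0:ℝ) < Real.pi := Real.pi_pos
  have ht₂pos : 0 < t₂ := by
    rw [ht₂def]; split_ifs with h
    · positivity
    · apply div_pos _ hωpos; push_neg at h; linarith
  have ht₂le : t₂ ≤ 2 * Real.pi / ω := by
    rw [ht₂def]; split_ifs with h
    · gcongr; linarith
    · push_neg at h; gcongr; linarith
  -- ωt₂ = θ mod 2π
  have hωt₂ : ω * t₂ = θ ∨ ω * t₂ = θ + 2 * Real.pi := by
    rw [ht₂def]; split_ifs with h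
    · left; field_simp
    · right; field_simp
  -- f = g on [0, t₂]
  have heq : f t₂ = g t₂ := by
    have key := ODE_solution_unique (v := fun _ z => c * z) (K := ‖c‖₊)
      (fun _ => by simpa [smul_eq_mul] using lipschitzWith_smul (β := ℂ) c)
      (f := f) (g := g) (a := 0) (b := t₂)
      (HasDerivAt.continuousOn (fun t _ => hf' t))
      (fun t _ => (hf' t).hasDerivWithinAt)
      (HasDerivAt.continuousOn (fun t _ => hg' t))
      (fun t _ => (hg' t).hasDerivWithinAt)
      (by simp [hfdef, hgdef, hu0, hu'0, hz₀def])
    exact key (Set.right_mem_Icc.mpr ht₂pos.le)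
  -- rewrite g t₂
  set r : ℝ := Real.exp (-μ * t₂) * ‖z₀ / w‖ with hrdef
  have habs : ‖z₀ / w‖ ≠ 0 := by
    simp [norm_ne_zero_iff, hz₀, hw, div_eq_zero_iff]
  have hrpos : 0 < r := by
    rw [hrdef]
    exact mul_pos (Real.exp_pos _) ((norm_pos_iff).mpr (div_ne_zero hz₀ hw))
  have hgval : g t₂ = (r : ℂ) * w := by
    simp only [hgdef]
    have hsplit : Complex.exp (c * t₂) =
        (Real.exp (-μ * t₂) : ℂ) * Complex.exp (-(ω * t₂ : ℝ) * I) := by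
      rw [Complex.ofReal_exp, ← Complex.exp_add]
      congr 1
      rw [hcdef]; push_cast; ring
    have hrot : Complex.exp (-(ω * t₂ : ℝ) * I) * z₀ = ((‖z₀ / w‖ : ℝ) : ℂ) * w := by
      have hbase : z₀ = ((‖z₀ / w‖ : ℝ) : ℂ) * Complex.exp ((θ : ℝ) * I) * w := by
        have h := Complex.norm_mul_exp_arg_mul_I (z₀ / w)
        calc z₀ = z₀ / w * w := by field_simp
          _ = _ := by conv_lhs => rw [← h]
      have hexp : Complex.exp (-(ω * t₂ : ℝ) * I) * Complex.exp ((θ : ℝ) * I) = 1 := by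
        rw [← Complex.exp_add]
        rcases hωt₂ with h | h
        · have h0 : (-(ω * t₂ : ℝ) : ℂ) * I + ((θ : ℝ) : ℂ) * I = 0 := by
            rw [h]; ring
          rw [h0, Complex.exp_zero]
        · have h0 : (-(ω * t₂ : ℝ) : ℂ) * I + ((θ : ℝ) : ℂ) * I
              = -(2 * (Real.pi : ℂ) * I) := by
            rw [h]; push_cast; ring
          rw [h0, Complex.exp_neg, Complex.exp_two_pi_mul_I, inv_one]
      conv_lhs => rw [hbase]
      linear_combination (((‖z₀ / w‖ : ℝ) : ℂ) * w) * hexp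
    rw [hsplit, mul_assoc, hrot, hrdef]
    push_cast
    ring
  -- conclude
  refine ⟨r, t₂, hrpos, ht₂pos, ht₂le, ?_, ?_⟩
  · have := congrArg Complex.re (heq.trans hgval)
    simpa [hfdef, hwdef] using this
  · have him := congrArg Complex.im (heq.trans hgval)
    have : (deriv u t₂ + μ * u t₂) / ω = r * ((δ₀ + μ * γ) / ω) := by
      simpa [hfdef, hwdef] using him
    have hre := congrArg Complex.re (heq.trans hgval)
    have hre' : u t₂ = r * γ := by simpa [hfdef, hwdef] using hre
    field_simp at this
    linear_combination this - μ * hre'
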